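/- Let (A, ·) be a commutative associative K-algebra and (L, [·,…,·], ε, α, β) an n-BiHom-Lie color algebra. Then A⊗L, graded by (A⊗L)_γ = A⊗L_γ, with bracket [a₁⊗x₁,…,aₙ⊗xₙ]' := a₁⋯aₙ ⊗ [x₁,…,xₙ], maps α'(a⊗x)=a⊗α(x), β'(a⊗x)=a⊗β(x), and bicharacter induced by ε, is an n-BiHom-Lie color algebra. -/

import Mathlib

open Finset TensorProduct

/-- An `n`-BiHom-Lie color algebra (with `n = arity = N+1`, so the structure parameter `N`
equals `n-1`): a `Γ`-graded `K`-vector space `L` with an even `(N+1)`-linear bracket,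
a skew-symmetric bicharacter `ε`, and two even commuting linear maps `α, β` satisfying the
`ε`-BiHom-skew-symmetry and the BiHom `ε`-Jacobi identity. -/
structure NBLCA (K : Type*) [Field K] (Γ : Type*) [AddCommGroup Γ] [DecidableEq Γ] (N : ℕ)
    (L : Type*) [AddCommGroup L] [Module K L] : Type _ where
  grading : Γ → Submodule K L
  internal : DirectSum.IsInternal grading
  ε : Γ → Γ → K
  α : L →ₗ[K] L
  β : L →ₗ[K] L
  bracket : MultilinearMap K (fun _ : Fin (N + 1) => L) L
  eps_ne : ∀ a b, ε a b ≠ 0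
  eps_skew : ∀ a b, ε a b * ε b a = 1
  eps_add_right : ∀ a b c, ε a (b + c) = ε a b * ε a c
  eps_add_left : ∀ a b c, ε (a + b) c = ε a c * ε b c
  α_even : ∀ (γ : Γ) (x : L), x ∈ grading γ → α x ∈ grading γ
  β_even : ∀ (γ : Γ) (x : L), x ∈ grading γ → β x ∈ grading γ
  αβ_comm : ∀ x, α (β x) = β (α x)
  bracket_grade : ∀ (d : Fin (N + 1) → Γ) (x : Fin (N + 1) → L),
    (∀ i, x i ∈ grading (d i)) → bracket x ∈ grading (∑ i, d i)
  skew : ∀ (d : Fin (N + 1) → Γ) (x : Fin (N + 1) → L), (∀ i, x i ∈ grading (d i)) →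
    ∀ k : Fin N,
      bracket (Fin.snoc (fun i : Fin N => β ((x ∘ Equiv.swap k.castSucc k.succ) i.castSucc))
          (α ((x ∘ Equiv.swap k.castSucc k.succ) (Fin.last N))))
        = (-(ε (d k.castSucc) (d k.succ))) •
          bracket (Fin.snoc (fun i : Fin N => β (x i.castSucc)) (α (x (Fin.last N))))
  jacobi : ∀ (dx : Fin N → Γ) (x : Fin N → L) (dy : Fin (N + 1) → Γ) (y : Fin (N + 1) → L),
    (∀ i, x i ∈ grading (dx i)) → (∀ i, y i ∈ grading (dy i)) →
    bracket (Fin.snoc (fun i : Fin N => β (β (x i)))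
        (bracket (Fin.snoc (fun i : Fin N => β (y i.castSucc)) (α (y (Fin.last N))))))
      = ∑ k : Fin (N + 1), ε (∑ i, dx i) (∑ l ∈ Finset.Iio k, dy l) •
          bracket (Function.update (fun i => β (β (y i))) k
            (bracket (Fin.snoc (fun i : Fin N => β (x i)) (α (y k)))))

namespace NBLCA

variable {K : Type*} [Field K] {Γ : Type*} [AddCommGroup Γ] [DecidableEq Γ] {N : ℕ}
  {L : Type*} [AddCommGroup L] [Module K L]

/-- `α` and `β` are morphisms for the bracket. -/
def IsMultiplicative (A : NBLCA K Γ N L) : Prop :=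
  (∀ x, A.α (A.bracket x) = A.bracket fun i => A.α (x i)) ∧
  (∀ x, A.β (A.bracket x) = A.bracket fun i => A.β (x i))

/-- A linear map homogeneous of degree `d`. -/
def HasDegree (A : NBLCA K Γ N L) (d : Γ) (D : L →ₗ[K] L) : Prop :=
  ∀ (γ : Γ) (x : L), x ∈ A.grading γ → D x ∈ A.grading (γ + d)

/-- A linear map commuting with the twisting maps `α` and `β`. -/
def CommutesTw (A : NBLCA K Γ N L) (D : L →ₗ[K] L) : Prop :=
  (∀ x, D (A.α x) = A.α (D x)) ∧ (∀ x, D (A.β x) = A.β (D x))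

/-- The twisting map `βʳ ∘ αᵏ`. -/
def tw (A : NBLCA K Γ N L) (k r : ℕ) : L →ₗ[K] L := (A.β ^ r) ∘ₗ (A.α ^ k)

/-- `(αᵏ, βʳ)`-derivation of degree `d`. -/
def IsDer (A : NBLCA K Γ N L) (k r : ℕ) (d : Γ) (D : L →ₗ[K] L) : Prop :=
  A.HasDegree d D ∧ A.CommutesTw D ∧
  ∀ (dx : Fin (N + 1) → Γ) (x : Fin (N + 1) → L), (∀ i, x i ∈ A.grading (dx i)) →
    D (A.bracket x) = ∑ i : Fin (N + 1), A.ε d (∑ l ∈ Finset.Iio i, dx l) •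
      A.bracket (Function.update (fun j => A.tw k r (x j)) i (D (x i)))

/-- `(αᵏ, βʳ)`-centroid elements of degree `d`. -/
def IsCent (A : NBLCA K Γ N L) (k r : ℕ) (d : Γ) (D : L →ₗ[K] L) : Prop :=
  A.HasDegree d D ∧ A.CommutesTw D ∧
  ∀ (i : Fin (N + 1)) (dx : Fin (N + 1) → Γ) (x : Fin (N + 1) → L),
    (∀ j, x j ∈ A.grading (dx j)) →
    D (A.bracket x) = A.ε d (∑ l ∈ Finset.Iio i, dx l) •
      A.bracket (Function.update (fun j => A.tw k r (x j)) i (D (x i)))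

/-- `(αᵏ, βʳ)`-quasicentroid elements of degree `d`. -/
def IsQC (A : NBLCA K Γ N L) (k r : ℕ) (d : Γ) (D : L →ₗ[K] L) : Prop :=
  A.HasDegree d D ∧ A.CommutesTw D ∧
  ∀ (i : Fin (N + 1)) (dx : Fin (N + 1) → Γ) (x : Fin (N + 1) → L),
    (∀ j, x j ∈ A.grading (dx j)) →
    A.bracket (Function.update (fun j => A.tw k r (x j)) 0 (D (x 0)))
      = A.ε d (∑ l ∈ Finset.Iio i, dx l) •
        A.bracket (Function.update (fun j => A.tw k r (x j)) i (D (x i)))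

/-- Central `(αᵏ, βʳ)`-derivation of degree `d`. -/
def IsZDer (A : NBLCA K Γ N L) (k r : ℕ) (d : Γ) (D : L →ₗ[K] L) : Prop :=
  A.HasDegree d D ∧ A.CommutesTw D ∧
  ∀ (dx : Fin (N + 1) → Γ) (x : Fin (N + 1) → L), (∀ i, x i ∈ A.grading (dx i)) →
    D (A.bracket x) = 0 ∧
    ∀ i : Fin (N + 1), A.ε d (∑ l ∈ Finset.Iio i, dx l) •
      A.bracket (Function.update (fun j => A.tw k r (x j)) i (D (x i))) = 0

/-- BiHom-ideal of an `n`-BiHom-Lie color algebra. -/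
def IsBiHomIdeal (A : NBLCA K Γ N L) (I : Submodule K L) : Prop :=
  (∀ x ∈ I, A.α x ∈ I) ∧ (∀ x ∈ I, A.β x ∈ I) ∧
  ∀ x : Fin (N + 1) → L, x 0 ∈ I → A.bracket x ∈ I

/-- The derived sequence `L₀ = L`, `Lₘ₊₁ = [Lₘ, …, Lₘ]`. -/
def derived (A : NBLCA K Γ N L) : ℕ → Submodule K L
  | 0 => ⊤
  | m + 1 => Submodule.span K
      {z | ∃ x : Fin (N + 1) → L, (∀ i, x i ∈ A.derived m) ∧ z = A.bracket x}

end NBLCA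


section Aux

variable {K : Type*} [Field K] {C : Type*} [CommRing C] [Algebra K C]
  {L : Type*} [AddCommGroup L] [Module K L]

set_option maxHeartbeats 800000

private lemma uncurryLeft_add {n : ℕ} {M P : Type*} [AddCommGroup M] [Module K M]
    [AddCommGroup P] [Module K P]
    (F G : M →ₗ[K] MultilinearMap K (fun _ : Fin n => M) P) :
    (LinearMap.uncurryLeft (F + G) : MultilinearMap K (fun _ : Fin (n+1) => M) P)
      = LinearMap.uncurryLeft F + LinearMap.uncurryLeft G :=
  MultilinearMap.ext fun v => by
    simp [LinearMap.uncurryLeft_apply]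

private lemma uncurryLeft_smul {n : ℕ} {M P : Type*} [AddCommGroup M] [Module K M]
    [AddCommGroup P] [Module K P] (s : K)
    (F : M →ₗ[K] MultilinearMap K (fun _ : Fin n => M) P) :
    (LinearMap.uncurryLeft (s • F) : MultilinearMap K (fun _ : Fin (n+1) => M) P)
      = s • LinearMap.uncurryLeft F :=
  MultilinearMap.ext fun v => by
    simp [LinearMap.uncurryLeft_apply]

noncomputable def tzipStep (n : ℕ)
    (T : MultilinearMap K (fun _ : Fin n => C) C →ₗ[K]
      MultilinearMap K (fun _ : Fin n => L) L →ₗ[K]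
        MultilinearMap K (fun _ : Fin n => C ⊗[K] L) (C ⊗[K] L))
    (g : MultilinearMap K (fun _ : Fin (n + 1) => C) C)
    (f : MultilinearMap K (fun _ : Fin (n + 1) => L) L) :
    MultilinearMap K (fun _ : Fin (n + 1) => C ⊗[K] L) (C ⊗[K] L) :=
  LinearMap.uncurryLeft (TensorProduct.lift
    (LinearMap.mk₂ K (fun c x => T (g.curryLeft c) (f.curryLeft x))
      (fun c c' x => by simp [map_add])
      (fun s c x => by simp [map_smul])
      (fun c x x' => by simp [map_add])
      (fun s c x => by simp [map_smul])))

lemma tzipStep_apply (n : ℕ) (T) (g) (f) (v : Fin (n + 1) → C ⊗[K] L) :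
    tzipStep n T g f v
      = TensorProduct.lift
          (LinearMap.mk₂ K (fun c x => T (g.curryLeft c) (f.curryLeft x))
            (fun c c' x => by simp [map_add])
            (fun s c x => by simp [map_smul])
            (fun c x x' => by simp [map_add])
            (fun s c x => by simp [map_smul])) (v 0) (Fin.tail v) := rfl

lemma tzipStep_add_left (n : ℕ) (T) (g g' : MultilinearMap K (fun _ : Fin (n + 1) => C) C)
    (f : MultilinearMap K (fun _ : Fin (n + 1) => L) L) :
    tzipStep (C := C) (L := L) n T (g + g') f = tzipStep n T g f + tzipStep n T g' f := by
  refine MultilinearMap.ext fun v => ?_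
  rw [MultilinearMap.add_apply, tzipStep_apply, tzipStep_apply, tzipStep_apply]
  generalize Fin.tail v = w
  generalize v 0 = t
  induction t with
  | zero => simp
  | tmul c x =>
      rw [TensorProduct.lift.tmul, TensorProduct.lift.tmul, TensorProduct.lift.tmul]
      simp only [LinearMap.mk₂_apply]
      rw [show (g + g').curryLeft c = g.curryLeft c + g'.curryLeft c from rfl]
      simp [map_add]
  | add a b ha hb =>
      simp only [map_add, MultilinearMap.add_apply, ha, hb]
      abel

lemma tzipStep_smul_left (n : ℕ) (T) (s : K) (g : MultilinearMap K (fun _ : Fin (n + 1) => C) C)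
    (f : MultilinearMap K (fun _ : Fin (n + 1) => L) L) :
    tzipStep (C := C) (L := L) n T (s • g) f = s • tzipStep n T g f := by
  refine MultilinearMap.ext fun v => ?_
  rw [MultilinearMap.smul_apply, tzipStep_apply, tzipStep_apply]
  generalize Fin.tail v = w
  generalize v 0 = t
  induction t with
  | zero => simp
  | tmul c x =>
      rw [TensorProduct.lift.tmul, TensorProduct.lift.tmul]
      simp only [LinearMap.mk₂_apply]
      rw [show (s • g).curryLeft c = s • g.curryLeft c from rfl]
      simp [map_smul]
  | add a b ha hb =>
      simp only [map_add, MultilinearMap.add_apply, ha, hb, smul_add]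

lemma tzipStep_add_right (n : ℕ) (T) (g : MultilinearMap K (fun _ : Fin (n + 1) => C) C)
    (f f' : MultilinearMap K (fun _ : Fin (n + 1) => L) L) :
    tzipStep (C := C) (L := L) n T g (f + f') = tzipStep n T g f + tzipStep n T g f' := by
  refine MultilinearMap.ext fun v => ?_
  rw [MultilinearMap.add_apply, tzipStep_apply, tzipStep_apply, tzipStep_apply]
  generalize Fin.tail v = w
  generalize v 0 = t
  induction t with
  | zero => simp
  | tmul c x =>
      rw [TensorProduct.lift.tmul, TensorProduct.lift.tmul, TensorProduct.lift.tmul]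
      simp only [LinearMap.mk₂_apply]
      rw [show (f + f').curryLeft x = f.curryLeft x + f'.curryLeft x from rfl]
      simp [map_add]
  | add a b ha hb =>
      simp only [map_add, MultilinearMap.add_apply, ha, hb]
      abel

lemma tzipStep_smul_right (n : ℕ) (T) (s : K) (g : MultilinearMap K (fun _ : Fin (n + 1) => C) C)
    (f : MultilinearMap K (fun _ : Fin (n + 1) => L) L) :
    tzipStep (C := C) (L := L) n T g (s • f) = s • tzipStep n T g f := by
  refine MultilinearMap.ext fun v => ?_
  rw [MultilinearMap.smul_apply, tzipStep_apply, tzipStep_apply]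
  generalize Fin.tail v = w
  generalize v 0 = t
  induction t with
  | zero => simp
  | tmul c x =>
      rw [TensorProduct.lift.tmul, TensorProduct.lift.tmul]
      simp only [LinearMap.mk₂_apply]
      rw [show (s • f).curryLeft x = s • f.curryLeft x from rfl]
      simp [map_smul]
  | add a b ha hb =>
      simp only [map_add, MultilinearMap.add_apply, ha, hb, smul_add]

noncomputable def tzip : ∀ (n : ℕ),
    MultilinearMap K (fun _ : Fin n => C) C →ₗ[K]
      MultilinearMap K (fun _ : Fin n => L) L →ₗ[K]
        MultilinearMap K (fun _ : Fin n => C ⊗[K] L) (C ⊗[K] L)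
  | 0 => LinearMap.mk₂ K
      (fun g f => MultilinearMap.constOfIsEmpty K _
        ((g fun i => i.elim0) ⊗ₜ[K] (f fun i => i.elim0)))
      (fun g g' f => MultilinearMap.ext fun v => by
        simp [TensorProduct.add_tmul])
      (fun s g f => MultilinearMap.ext fun v => by
        simp [TensorProduct.smul_tmul'])
      (fun g f f' => MultilinearMap.ext fun v => by
        simp [TensorProduct.tmul_add])
      (fun s g f => MultilinearMap.ext fun v => by
        simp [TensorProduct.tmul_smul])
  | (n + 1) => LinearMap.mk₂ K (tzipStep n (tzip n))
      (tzipStep_add_left n (tzip n))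
      (tzipStep_smul_left n (tzip n))
      (tzipStep_add_right n (tzip n))
      (tzipStep_smul_right n (tzip n))

theorem tzip_tmul : ∀ (n : ℕ) (g : MultilinearMap K (fun _ : Fin n => C) C)
    (f : MultilinearMap K (fun _ : Fin n => L) L) (c : Fin n → C) (x : Fin n → L),
    tzip n g f (fun i => c i ⊗ₜ[K] x i) = g c ⊗ₜ[K] f x
  | 0, g, f, c, x => by
      have hc : c = fun i => i.elim0 := Subsingleton.elim _ _
      have hx : x = fun i => i.elim0 := Subsingleton.elim _ _
      subst hc; subst hx
      simp [tzip]
  | (n + 1), g, f, c, x => by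
      have h := tzip_tmul n (g.curryLeft (c 0)) (f.curryLeft (x 0)) (Fin.tail c) (Fin.tail x)
      show tzipStep n (tzip n) g f _ = _
      rw [tzipStep_apply]
      have ht : Fin.tail (fun i : Fin (n + 1) => c i ⊗ₜ[K] x i)
          = fun i : Fin n => Fin.tail c i ⊗ₜ[K] Fin.tail x i := rfl
      rw [ht, TensorProduct.lift.tmul]
      simp only [LinearMap.mk₂_apply]
      rw [h]
      congr 1 <;>
        · rw [show ∀ z m, MultilinearMap.curryLeft z _ m = z (Fin.cons _ m) from
            fun z m => rfl]
          rw [Fin.cons_self_tail]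

theorem mspan {M P : Type*} [AddCommGroup M] [Module K M] [AddCommGroup P] [Module K P] :
    ∀ (n : ℕ) (f : MultilinearMap K (fun _ : Fin n => M) P) (s : Fin n → Set M)
      (q : Submodule K P) (_ : ∀ v, (∀ i, v i ∈ s i) → f v ∈ q)
      (v : Fin n → M), (∀ i, v i ∈ Submodule.span K (s i)) → f v ∈ q
  | 0, f, s, q, hgen, v, _ => hgen v (fun i => i.elim0)
  | (n + 1), f, s, q, hgen, v, hv => by
      have key : ∀ m ∈ Submodule.span K (s 0), f.curryLeft m (Fin.tail v) ∈ q := by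
        intro m hm
        induction hm using Submodule.span_induction with
        | mem z hz =>
            refine mspan n (f.curryLeft z) (fun i => s i.succ) q
              (fun w hw => ?_) (Fin.tail v) (fun i => hv i.succ)
            have hmem : ∀ i, (Fin.cons z w : Fin (n+1) → M) i ∈ s i := by
              intro i
              induction i using Fin.cases with
              | zero => simpa using hz
              | succ j => simpa using hw j
            simpa using hgen (Fin.cons z w : Fin (n+1) → M) hmem
        | zero => simp
        | add a b _ _ ha hb => simpa [map_add] using add_mem ha hb
        | smul t a _ ha => simpa [map_smul] using Submodule.smul_mem q t ha
      have := key (v 0) (hv 0)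
      simpa [Fin.cons_self_tail] using this

theorem eq_on_span {n : ℕ} {M P : Type*} [AddCommGroup M] [Module K M] [AddCommGroup P]
    [Module K P] (f g : MultilinearMap K (fun _ : Fin n => M) P) (s : Fin n → Set M)
    (hgen : ∀ v, (∀ i, v i ∈ s i) → f v = g v)
    (v : Fin n → M) (hv : ∀ i, v i ∈ Submodule.span K (s i)) : f v = g v := by
  have := mspan n (f - g) s ⊥
    (fun w hw => by simp [MultilinearMap.sub_apply, hgen w hw]) v hv
  simpa [MultilinearMap.sub_apply, sub_eq_zero] using this

theorem range_lTensor_eq_span (p : Submodule K L) :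
    LinearMap.range (TensorProduct.map (LinearMap.id : C →ₗ[K] C) p.subtype)
      = Submodule.span K {z : C ⊗[K] L | ∃ (c : C) (y : L), y ∈ p ∧ z = c ⊗ₜ[K] y} := by
  apply le_antisymm
  · rintro z ⟨t, rfl⟩
    induction t with
    | zero => simp
    | tmul c m => exact Submodule.subset_span ⟨c, m, m.2, by simp⟩
    | add a b ha hb => rw [map_add]; exact add_mem ha hb
  · rw [Submodule.span_le]
    rintro z ⟨c, y, hy, rfl⟩
    exact ⟨c ⊗ₜ[K] ⟨y, hy⟩, by simp⟩

theorem tmul_mem_range (p : Submodule K L) (c : C) {y : L} (hy : y ∈ p) :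
    c ⊗ₜ[K] y ∈ LinearMap.range (TensorProduct.map (LinearMap.id : C →ₗ[K] C) p.subtype) :=
  ⟨c ⊗ₜ[K] ⟨y, hy⟩, by simp⟩

end Aux

section Aux2

open DirectSum

variable {K : Type*} [Field K] {Γ : Type*} [AddCommGroup Γ] [DecidableEq Γ]
  {C : Type*} [CommRing C] [Algebra K C] {L : Type*} [AddCommGroup L] [Module K L]

set_option maxHeartbeats 800000

theorem internal_tensor (p : Γ → Submodule K L) (hp : DirectSum.IsInternal p) :
    DirectSum.IsInternal (fun γ => LinearMap.range
      (TensorProduct.map (LinearMap.id : C →ₗ[K] C) (p γ).subtype)) := by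
  classical
  set u : (⨁ γ, p γ) ≃ₗ[K] L := LinearEquiv.ofBijective (DirectSum.coeLinearMap p) hp with hu_def
  set e : C ⊗[K] L ≃ₗ[K] ⨁ γ, C ⊗[K] (p γ) :=
    (TensorProduct.congr (LinearEquiv.refl K C) u.symm).trans
      (TensorProduct.directSumRight K K C (fun γ => (p γ : Submodule K L))) with he_def
  have he : ∀ (γ : Γ) (c : C) (m : p γ),
      e (c ⊗ₜ[K] (m : L)) = DirectSum.lof K Γ (fun δ => C ⊗[K] (p δ)) γ (c ⊗ₜ[K] m) := by
    intro γ c m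
    have hu : u.symm (m : L) = DirectSum.lof K Γ (fun δ => (p δ : Submodule K L)) γ m := by
      apply u.injective
      rw [LinearEquiv.apply_symm_apply]
      simp [hu_def, LinearEquiv.ofBijective_apply, DirectSum.lof_eq_of, DirectSum.coeLinearMap_of]
      exact (DirectSum.coeLinearMap_of p γ m).symm
    rw [he_def]
    simp only [LinearEquiv.trans_apply, TensorProduct.congr_tmul, LinearEquiv.refl_apply, hu]
    rw [TensorProduct.directSumRight_tmul_lof]
  have hmap : ∀ γ, Submodule.map (e : C ⊗[K] L →ₗ[K] ⨁ δ, C ⊗[K] (p δ)) (LinearMap.range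
        (TensorProduct.map (LinearMap.id : C →ₗ[K] C) (p γ).subtype))
      = LinearMap.range (DirectSum.lof K Γ (fun δ => C ⊗[K] (p δ)) γ) := by
    intro γ
    rw [← LinearMap.range_comp]
    have heq : (e : C ⊗[K] L →ₗ[K] ⨁ δ, C ⊗[K] (p δ)) ∘ₗ
        (TensorProduct.map (LinearMap.id : C →ₗ[K] C) (p γ).subtype)
        = DirectSum.lof K Γ (fun δ => C ⊗[K] (p δ)) γ := by
      apply TensorProduct.ext'
      intro c m
      simp only [LinearMap.comp_apply, TensorProduct.map_tmul, LinearMap.id_coe, id_eq,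
        Submodule.coe_subtype, LinearEquiv.coe_coe]
      exact he γ c m
    rw [heq]
  have indep2 : iSupIndep (fun γ => LinearMap.range
      (DirectSum.lof K Γ (fun δ => C ⊗[K] (p δ)) γ)) := by
    rw [iSupIndep_def]
    intro γ
    rw [Submodule.disjoint_def]
    rintro z ⟨m, rfl⟩ hz'
    have hker : (⨆ (δ) (_ : δ ≠ γ), LinearMap.range (DirectSum.lof K Γ (fun δ => C ⊗[K] (p δ)) δ))
        ≤ LinearMap.ker (DirectSum.component K Γ (fun δ => C ⊗[K] (p δ)) γ) := by
      refine iSup_le fun δ => iSup_le fun hδ => ?_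
      rintro z ⟨m', rfl⟩
      rw [LinearMap.mem_ker, DirectSum.component.of, dif_neg hδ]
    have h0 := hker hz'
    rw [LinearMap.mem_ker, DirectSum.component.lof_self] at h0
    rw [h0, map_zero]
  have indep : iSupIndep (fun γ => LinearMap.range
      (TensorProduct.map (LinearMap.id : C →ₗ[K] C) (p γ).subtype)) := by
    rw [← iSupIndep_map_orderIso_iff (f := Submodule.orderIsoMapComap
      (e : C ⊗[K] L ≃ₗ[K] ⨁ δ, C ⊗[K] (p δ)))]
    have hfam : (⇑(Submodule.orderIsoMapComap (e : C ⊗[K] L ≃ₗ[K] ⨁ δ, C ⊗[K] (p δ))) ∘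
          fun γ => LinearMap.range (TensorProduct.map (LinearMap.id : C →ₗ[K] C) (p γ).subtype))
        = fun γ => LinearMap.range (DirectSum.lof K Γ (fun δ => C ⊗[K] (p δ)) γ) := by
      funext γ
      show Submodule.map _ _ = _
      exact hmap γ
    rw [hfam]
    exact indep2
  have htop : (⨆ γ, LinearMap.range
      (TensorProduct.map (LinearMap.id : C →ₗ[K] C) (p γ).subtype)) = ⊤ := by
    rw [eq_top_iff]
    rintro t -
    induction t with
    | zero => exact zero_mem _
    | add a b ha hb => exact add_mem ha hb
    | tmul c y =>
        have hy : y ∈ ⨆ γ, p γ := by rw [hp.submodule_iSup_eq_top]; trivial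
        refine Submodule.iSup_induction (motive := fun z => c ⊗ₜ[K] z ∈
          ⨆ γ, LinearMap.range (TensorProduct.map (LinearMap.id : C →ₗ[K] C) (p γ).subtype))
          p hy (fun γ z hz => ?_) (by simp) (fun z w hz hw => ?_)
        · exact Submodule.mem_iSup_of_mem γ ⟨c ⊗ₜ[K] ⟨z, hz⟩, by simp⟩
        · simpa [TensorProduct.tmul_add] using add_mem hz hw
  exact DirectSum.isInternal_submodule_of_iSupIndep_of_iSup_eq_top indep htop

theorem snoc_eq_fun {n : ℕ} {M : Type*} (g : Fin (n + 1) → M) (b a : M → M) :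
    (Fin.snoc (fun i : Fin n => b (g i.castSucc)) (a (g (Fin.last n))) : Fin (n + 1) → M)
      = fun j => (Fin.snoc (fun _ : Fin n => b) a : Fin (n + 1) → M → M) j (g j) := by
  funext j
  induction j using Fin.lastCases with
  | last => simp
  | cast i => simp

theorem snoc_tmul {n : ℕ} (a : Fin n → C) (u : Fin n → L) (c0 : C) (z0 : L) :
    (Fin.snoc (fun i => a i ⊗ₜ[K] u i) (c0 ⊗ₜ[K] z0) : Fin (n + 1) → C ⊗[K] L)
      = fun j => (Fin.snoc a c0 : Fin (n + 1) → C) j ⊗ₜ[K] (Fin.snoc u z0 : Fin (n + 1) → L) j := by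
  funext j
  induction j using Fin.lastCases with
  | last => simp
  | cast i => simp

theorem update_tmul {n : ℕ} (b : Fin n → C) (w : Fin n → L) (k : Fin n) (c0 : C) (z0 : L) :
    Function.update (fun j => b j ⊗ₜ[K] w j) k (c0 ⊗ₜ[K] z0)
      = fun j => Function.update b k c0 j ⊗ₜ[K] Function.update w k z0 j := by
  funext j
  by_cases h : j = k
  · subst h; simp
  · simp [Function.update_apply, h]

end Aux2

section Aux3

variable {K : Type*} [Field K] {Γ : Type*} [AddCommGroup Γ] [DecidableEq Γ] {N : ℕ}
  {C : Type*} [CommRing C] [Algebra K C] {L : Type*} [AddCommGroup L] [Module K L]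

set_option maxHeartbeats 1000000

theorem snoc_eq_fun_lin {n : ℕ} {M P : Type*} [AddCommGroup M] [Module K M] [AddCommGroup P]
    [Module K P] (g : Fin (n + 1) → M) (b a : M →ₗ[K] P) :
    (Fin.snoc (fun i : Fin n => b (g i.castSucc)) (a (g (Fin.last n))) : Fin (n + 1) → P)
      = fun j => (Fin.snoc (fun _ : Fin n => b) a : Fin (n + 1) → M →ₗ[K] P) j (g j) := by
  funext j
  induction j using Fin.lastCases with
  | last => simp
  | cast i => simp

theorem update_eq_fun {n : ℕ} {M P : Type*} [AddCommGroup M] [Module K M] [AddCommGroup P]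
    [Module K P] (g : Fin n → M) (b h : M →ₗ[K] P) (k : Fin n) :
    (fun j => (Function.update (fun _ : Fin n => b) k h) j (g j))
      = Function.update (fun j => b (g j)) k (h (g k)) := by
  funext j
  by_cases hj : j = k
  · subst hj; simp
  · simp [Function.update_of_ne hj]

/-- The grading on `C ⊗ L`. -/
noncomputable def grT (A : NBLCA K Γ N L) (γ : Γ) : Submodule K (C ⊗[K] L) :=
  LinearMap.range (TensorProduct.map (LinearMap.id : C →ₗ[K] C) (A.grading γ).subtype)

/-- The bracket on `C ⊗ L`. -/
noncomputable def brT (A : NBLCA K Γ N L) :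
    MultilinearMap K (fun _ : Fin (N + 1) => C ⊗[K] L) (C ⊗[K] L) :=
  tzip (N + 1) (MultilinearMap.mkPiAlgebra K (Fin (N + 1)) C) A.bracket

theorem brT_tmul (A : NBLCA K Γ N L) (c : Fin (N + 1) → C) (x : Fin (N + 1) → L) :
    brT A (fun i => c i ⊗ₜ[K] x i) = (∏ i, c i) ⊗ₜ[K] A.bracket x := by
  rw [show brT (C := C) A
      = tzip (N + 1) (MultilinearMap.mkPiAlgebra K (Fin (N + 1)) C) A.bracket from rfl,
    tzip_tmul]
  simp [MultilinearMap.mkPiAlgebra_apply]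

theorem mem_grT_iff_span (A : NBLCA K Γ N L) (γ : Γ) (t : C ⊗[K] L) :
    t ∈ grT A γ ↔ t ∈ Submodule.span K
      {z : C ⊗[K] L | ∃ (c : C) (y : L), y ∈ A.grading γ ∧ z = c ⊗ₜ[K] y} := by
  rw [grT, range_lTensor_eq_span]

theorem t_bracket_grade (A : NBLCA K Γ N L) (d : Fin (N + 1) → Γ) (x : Fin (N + 1) → C ⊗[K] L)
    (hx : ∀ i, x i ∈ grT A (d i)) : brT A x ∈ grT A (∑ i, d i) := by
  refine mspan (N + 1) (brT A)
    (fun i => {z | ∃ (c : C) (y : L), y ∈ A.grading (d i) ∧ z = c ⊗ₜ[K] y}) _ ?_ x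
    (fun i => by rw [← range_lTensor_eq_span]; exact hx i)
  intro v hv
  choose c y hy hv' using hv
  rw [funext hv', brT_tmul]
  exact tmul_mem_range _ _ (A.bracket_grade d y hy)

theorem mlin_tmul (A : NBLCA K Γ N L) (j : Fin (N + 1)) (cc : C) (yy : L) :
    (Fin.snoc (fun _ : Fin N => LinearMap.lTensor C A.β) (LinearMap.lTensor C A.α) :
        Fin (N + 1) → C ⊗[K] L →ₗ[K] C ⊗[K] L) j (cc ⊗ₜ[K] yy)
      = cc ⊗ₜ[K] ((Fin.snoc (fun _ : Fin N => A.β) A.α : Fin (N + 1) → L →ₗ[K] L) j yy) := by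
  induction j using Fin.lastCases with
  | last => simp
  | cast i => simp

theorem t_skew (A : NBLCA K Γ N L) (d : Fin (N + 1) → Γ) (x : Fin (N + 1) → C ⊗[K] L)
    (hx : ∀ i, x i ∈ grT A (d i)) (k : Fin N) :
    brT A (Fin.snoc (fun i : Fin N => LinearMap.lTensor C A.β
        ((x ∘ Equiv.swap k.castSucc k.succ) i.castSucc))
      (LinearMap.lTensor C A.α ((x ∘ Equiv.swap k.castSucc k.succ) (Fin.last N))))
    = (-(A.ε (d k.castSucc) (d k.succ))) •
      brT A (Fin.snoc (fun i : Fin N => LinearMap.lTensor C A.β (x i.castSucc))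
        (LinearMap.lTensor C A.α (x (Fin.last N)))) := by
  classical
  set mlin : Fin (N + 1) → (C ⊗[K] L →ₗ[K] C ⊗[K] L) :=
    (Fin.snoc (fun _ : Fin N => LinearMap.lTensor C A.β) (LinearMap.lTensor C A.α)) with hmlin
  have key : (((brT A).compLinearMap mlin).domDomCongr (Equiv.swap k.castSucc k.succ)) x
      = ((-(A.ε (d k.castSucc) (d k.succ))) • ((brT A).compLinearMap mlin)) x := by
    refine eq_on_span _ _
      (fun i => {z | ∃ (c : C) (y : L), y ∈ A.grading (d i) ∧ z = c ⊗ₜ[K] y}) ?_ x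
      (fun i => by rw [← range_lTensor_eq_span]; exact hx i)
    intro v hv
    choose c y hy hv' using hv
    rw [funext hv']
    rw [MultilinearMap.domDomCongr_apply, MultilinearMap.smul_apply,
      MultilinearMap.compLinearMap_apply, MultilinearMap.compLinearMap_apply]
    have h1 : (fun j => mlin j (c (Equiv.swap k.castSucc k.succ j)
          ⊗ₜ[K] y (Equiv.swap k.castSucc k.succ j)))
        = fun j => (c (Equiv.swap k.castSucc k.succ j)) ⊗ₜ[K]
            ((Fin.snoc (fun _ : Fin N => A.β) A.α : Fin (N + 1) → L →ₗ[K] L) j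
              (y (Equiv.swap k.castSucc k.succ j))) :=
      funext fun j => mlin_tmul A j _ _
    have h2 : (fun j => mlin j (c j ⊗ₜ[K] y j))
        = fun j => c j ⊗ₜ[K]
            ((Fin.snoc (fun _ : Fin N => A.β) A.α : Fin (N + 1) → L →ₗ[K] L) j (y j)) :=
      funext fun j => mlin_tmul A j _ _
    rw [h1, h2, brT_tmul, brT_tmul]
    have h3 : (fun j => (Fin.snoc (fun _ : Fin N => A.β) A.α : Fin (N + 1) → L →ₗ[K] L) j
          (y (Equiv.swap k.castSucc k.succ j)))
        = Fin.snoc (fun i : Fin N => A.β (y (Equiv.swap k.castSucc k.succ i.castSucc)))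
            (A.α (y (Equiv.swap k.castSucc k.succ (Fin.last N)))) := by
      funext j
      induction j using Fin.lastCases with
      | last => simp
      | cast i => simp
    have h4 : (fun j => (Fin.snoc (fun _ : Fin N => A.β) A.α : Fin (N + 1) → L →ₗ[K] L) j (y j))
        = Fin.snoc (fun i : Fin N => A.β (y i.castSucc)) (A.α (y (Fin.last N))) := by
      funext j
      induction j using Fin.lastCases with
      | last => simp
      | cast i => simp
    rw [h3, h4, Equiv.prod_comp (Equiv.swap k.castSucc k.succ) c]
    have hsk := A.skew d y hy k
    simp only [Function.comp_apply] at hsk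
    rw [hsk, TensorProduct.tmul_smul]
  rw [MultilinearMap.domDomCongr_apply, MultilinearMap.smul_apply,
    MultilinearMap.compLinearMap_apply, MultilinearMap.compLinearMap_apply] at key
  have hgoal1 : (Fin.snoc (fun i : Fin N => LinearMap.lTensor C A.β
        ((x ∘ Equiv.swap k.castSucc k.succ) i.castSucc))
      (LinearMap.lTensor C A.α ((x ∘ Equiv.swap k.castSucc k.succ) (Fin.last N)))
        : Fin (N + 1) → C ⊗[K] L)
      = fun j => mlin j (x (Equiv.swap k.castSucc k.succ j)) := by
    funext j
    induction j using Fin.lastCases with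
    | last => simp [hmlin]
    | cast i => simp [hmlin]
  have hgoal2 : (Fin.snoc (fun i : Fin N => LinearMap.lTensor C A.β (x i.castSucc))
      (LinearMap.lTensor C A.α (x (Fin.last N))) : Fin (N + 1) → C ⊗[K] L)
      = fun j => mlin j (x j) := by
    funext j
    induction j using Fin.lastCases with
    | last => simp [hmlin]
    | cast i => simp [hmlin]
  rw [hgoal1, hgoal2]
  exact key

theorem lTensor_comm (f g : L →ₗ[K] L) (h : ∀ z, f (g z) = g (f z)) (t : C ⊗[K] L) :
    LinearMap.lTensor C f (LinearMap.lTensor C g t) = LinearMap.lTensor C g (LinearMap.lTensor C f t) := by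
  induction t with
  | zero => simp
  | tmul c m => simp [h]
  | add a b ha hb => simp only [map_add, ha, hb]

theorem lTensor_even (p : Γ → Submodule K L) (f : L →ₗ[K] L)
    (hf : ∀ γ z, z ∈ p γ → f z ∈ p γ) (γ : Γ) (t : C ⊗[K] L)
    (ht : t ∈ LinearMap.range (TensorProduct.map (LinearMap.id : C →ₗ[K] C) (p γ).subtype)) :
    LinearMap.lTensor C f t
      ∈ LinearMap.range (TensorProduct.map (LinearMap.id : C →ₗ[K] C) (p γ).subtype) := by
  obtain ⟨s, rfl⟩ := ht
  induction s with
  | zero => simp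
  | tmul c m =>
      have h1 : (TensorProduct.map (LinearMap.id : C →ₗ[K] C) (p γ).subtype) (c ⊗ₜ[K] m)
          = c ⊗ₜ[K] (m : L) := by simp
      rw [h1, LinearMap.lTensor_tmul]
      exact ⟨c ⊗ₜ[K] ⟨f m, hf γ m m.2⟩, by simp⟩
  | add a b ha hb => rw [map_add, map_add]; exact add_mem ha hb

theorem t_jacobi (A : NBLCA K Γ N L) (dx : Fin N → Γ) (x : Fin N → C ⊗[K] L)
    (dy : Fin (N + 1) → Γ) (y : Fin (N + 1) → C ⊗[K] L)
    (hx : ∀ i, x i ∈ grT A (dx i)) (hy : ∀ i, y i ∈ grT A (dy i)) :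
    brT A (Fin.snoc (fun i : Fin N => LinearMap.lTensor C A.β (LinearMap.lTensor C A.β (x i)))
        (brT A (Fin.snoc (fun i : Fin N => LinearMap.lTensor C A.β (y i.castSucc))
          (LinearMap.lTensor C A.α (y (Fin.last N))))))
      = ∑ k : Fin (N + 1), A.ε (∑ i, dx i) (∑ l ∈ Finset.Iio k, dy l) •
          brT A (Function.update
            (fun i => LinearMap.lTensor C A.β (LinearMap.lTensor C A.β (y i))) k
            (brT A (Fin.snoc (fun i : Fin N => LinearMap.lTensor C A.β (x i))
              (LinearMap.lTensor C A.α (y k))))) := by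
  classical
  set β' : C ⊗[K] L →ₗ[K] C ⊗[K] L := LinearMap.lTensor C A.β with hβ'
  set α' : C ⊗[K] L →ₗ[K] C ⊗[K] L := LinearMap.lTensor C A.α with hα'
  -- Stage 2 core : the identity for pure `y`.
  have core : ∀ (b : Fin (N + 1) → C) (w : Fin (N + 1) → L), (∀ j, w j ∈ A.grading (dy j)) →
      brT A (Fin.snoc (fun i : Fin N => β' (β' (x i)))
          (brT A (Fin.snoc (fun i : Fin N => β' (b i.castSucc ⊗ₜ[K] w i.castSucc))
            (α' (b (Fin.last N) ⊗ₜ[K] w (Fin.last N))))))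
        = ∑ k : Fin (N + 1), A.ε (∑ i, dx i) (∑ l ∈ Finset.Iio k, dy l) •
            brT A (Function.update (fun j => β' (β' (b j ⊗ₜ[K] w j))) k
              (brT A (Fin.snoc (fun i : Fin N => β' (x i)) (α' (b k ⊗ₜ[K] w k))))) := by
    intro b w hw
    set T : C ⊗[K] L := (∏ j, b j) ⊗ₜ[K] A.bracket
        (Fin.snoc (fun i : Fin N => A.β (w i.castSucc)) (A.α (w (Fin.last N)))) with hT
    have hinner : brT A (Fin.snoc (fun i : Fin N => β' (b i.castSucc ⊗ₜ[K] w i.castSucc))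
          (α' (b (Fin.last N) ⊗ₜ[K] w (Fin.last N)))) = T := by
      have h1 : (Fin.snoc (fun i : Fin N => β' (b i.castSucc ⊗ₜ[K] w i.castSucc))
            (α' (b (Fin.last N) ⊗ₜ[K] w (Fin.last N))) : Fin (N + 1) → C ⊗[K] L)
          = fun j => b j ⊗ₜ[K]
              ((Fin.snoc (fun i : Fin N => A.β (w i.castSucc)) (A.α (w (Fin.last N)))
                : Fin (N + 1) → L) j) := by
        funext j
        induction j using Fin.lastCases with
        | last => simp [hα']
        | cast i => simp [hβ']
      rw [h1, brT_tmul, hT]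
    set Fx : MultilinearMap K (fun _ : Fin N => C ⊗[K] L) (C ⊗[K] L) :=
      (LinearMap.applyₗ T).compMultilinearMap
        (((brT A).curryRight).compLinearMap (fun _ : Fin N => β' ∘ₗ β')) with hFx
    set Gx : Fin (N + 1) → MultilinearMap K (fun _ : Fin N => C ⊗[K] L) (C ⊗[K] L) :=
      fun k => ((brT A).toLinearMap (fun j => b j ⊗ₜ[K] A.β (A.β (w j))) k).compMultilinearMap
        ((LinearMap.applyₗ (b k ⊗ₜ[K] A.α (w k))).compMultilinearMap
          (((brT A).curryRight).compLinearMap (fun _ : Fin N => β'))) with hGx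
    have key : Fx x = ∑ k : Fin (N + 1), A.ε (∑ i, dx i) (∑ l ∈ Finset.Iio k, dy l) • Gx k x := by
      have hgen : ∀ u : Fin N → C ⊗[K] L,
          (∀ i, u i ∈ {z : C ⊗[K] L | ∃ (c : C) (vv : L),
            vv ∈ A.grading (dx i) ∧ z = c ⊗ₜ[K] vv}) →
          Fx u = (∑ k : Fin (N + 1),
            A.ε (∑ i, dx i) (∑ l ∈ Finset.Iio k, dy l) • Gx k) u := by
        intro u hu
        choose a v hv hu' using hu
        have huu : u = fun i => a i ⊗ₜ[K] v i := funext hu'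
        subst huu
        rw [MultilinearMap.sum_apply]
        simp only [MultilinearMap.smul_apply]
        have hLc : Fx (fun i => a i ⊗ₜ[K] v i)
            = ((∏ i, a i) * ∏ j, b j) ⊗ₜ[K]
              A.bracket (Fin.snoc (fun i : Fin N => A.β (A.β (v i)))
                (A.bracket (Fin.snoc (fun i : Fin N => A.β (w i.castSucc))
                  (A.α (w (Fin.last N)))))) := by
          have e0 : Fx (fun i => a i ⊗ₜ[K] v i)
              = brT A (Fin.snoc (fun i : Fin N => β' (β' (a i ⊗ₜ[K] v i))) T) := rfl
          have e1 : (Fin.snoc (fun i : Fin N => β' (β' (a i ⊗ₜ[K] v i))) T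
                : Fin (N + 1) → C ⊗[K] L)
              = fun j => ((Fin.snoc a (∏ j, b j) : Fin (N + 1) → C) j) ⊗ₜ[K]
                  ((Fin.snoc (fun i : Fin N => A.β (A.β (v i)))
                    (A.bracket (Fin.snoc (fun i : Fin N => A.β (w i.castSucc))
                      (A.α (w (Fin.last N))))) : Fin (N + 1) → L) j) := by
            funext j
            induction j using Fin.lastCases with
            | last => simp [hT]
            | cast i => simp [hβ']
          rw [e0, e1, brT_tmul, Fin.prod_snoc]
        have hRc : ∀ k : Fin (N + 1), Gx k (fun i => a i ⊗ₜ[K] v i)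
            = ((∏ i, a i) * ∏ j, b j) ⊗ₜ[K]
              A.bracket (Function.update (fun j => A.β (A.β (w j))) k
                (A.bracket (Fin.snoc (fun i : Fin N => A.β (v i)) (A.α (w k))))) := by
          intro k
          have e0 : Gx k (fun i => a i ⊗ₜ[K] v i)
              = brT A (Function.update (fun j => b j ⊗ₜ[K] A.β (A.β (w j))) k
                  (brT A (Fin.snoc (fun i : Fin N => β' (a i ⊗ₜ[K] v i))
                    (b k ⊗ₜ[K] A.α (w k))))) := rfl
          have e2 : (Fin.snoc (fun i : Fin N => β' (a i ⊗ₜ[K] v i)) (b k ⊗ₜ[K] A.α (w k))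
                : Fin (N + 1) → C ⊗[K] L)
              = fun j => ((Fin.snoc a (b k) : Fin (N + 1) → C) j) ⊗ₜ[K]
                  ((Fin.snoc (fun i : Fin N => A.β (v i)) (A.α (w k)) : Fin (N + 1) → L) j) := by
            funext j
            induction j using Fin.lastCases with
            | last => simp
            | cast i => simp [hβ']
          rw [e0, e2, brT_tmul, Fin.prod_snoc, update_tmul, brT_tmul,
            Finset.prod_update_of_mem (Finset.mem_univ k)]
          rw [mul_assoc]
          congr 2
          rw [show (Finset.univ : Finset (Fin (N + 1))) \ {k} = Finset.univ.erase k by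
            rw [Finset.erase_eq]]
          exact Finset.mul_prod_erase Finset.univ b (Finset.mem_univ k)
        rw [hLc]
        simp only [hRc]
        simp only [← TensorProduct.tmul_smul]
        rw [← TensorProduct.tmul_sum]
        congr 1
        exact A.jacobi dx v dy w hv hw
      have h := eq_on_span Fx
        (∑ k : Fin (N + 1), A.ε (∑ i, dx i) (∑ l ∈ Finset.Iio k, dy l) • Gx k)
        (fun i => {z : C ⊗[K] L | ∃ (c : C) (vv : L), vv ∈ A.grading (dx i) ∧ z = c ⊗ₜ[K] vv})
        hgen x (fun i => by rw [← range_lTensor_eq_span]; exact hx i)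
      rw [h, MultilinearMap.sum_apply]
      simp only [MultilinearMap.smul_apply]
    rw [hinner]
    have hstart : brT A (Fin.snoc (fun i : Fin N => β' (β' (x i))) T) = Fx x := rfl
    rw [hstart, key]
    refine Finset.sum_congr rfl fun k _ => ?_
    congr 1
  -- Stage 1 : reduce `y` to pure tensors.
  set Φ : C ⊗[K] L →ₗ[K] C ⊗[K] L :=
    (brT A).toLinearMap (Fin.snoc (fun i : Fin N => β' (β' (x i))) 0) (Fin.last N) with hΦ
  set Ψ : C ⊗[K] L →ₗ[K] C ⊗[K] L :=
    (brT A).toLinearMap (Fin.snoc (fun i : Fin N => β' (x i)) 0) (Fin.last N) with hΨ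
  have hΦa : ∀ z, Φ z = brT A (Fin.snoc (fun i : Fin N => β' (β' (x i))) z) := by
    intro z
    show brT A (Function.update (Fin.snoc (fun i : Fin N => β' (β' (x i))) 0) (Fin.last N) z) = _
    rw [Fin.update_snoc_last]
  have hΨa : ∀ z, Ψ z = brT A (Fin.snoc (fun i : Fin N => β' (x i)) z) := by
    intro z
    show brT A (Function.update (Fin.snoc (fun i : Fin N => β' (x i)) 0) (Fin.last N) z) = _
    rw [Fin.update_snoc_last]
  set Fy : MultilinearMap K (fun _ : Fin (N + 1) => C ⊗[K] L) (C ⊗[K] L) :=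
    Φ.compMultilinearMap ((brT A).compLinearMap (Fin.snoc (fun _ : Fin N => β') α')) with hFy
  set Gy : Fin (N + 1) → MultilinearMap K (fun _ : Fin (N + 1) => C ⊗[K] L) (C ⊗[K] L) :=
    fun k => (brT A).compLinearMap
      (Function.update (fun _ : Fin (N + 1) => β' ∘ₗ β') k (Ψ ∘ₗ α')) with hGy
  have hFya : ∀ z : Fin (N + 1) → C ⊗[K] L,
      Fy z = brT A (Fin.snoc (fun i : Fin N => β' (β' (x i)))
        (brT A (Fin.snoc (fun i : Fin N => β' (z i.castSucc)) (α' (z (Fin.last N)))))) := by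
    intro z
    have h5 : (fun j => (Fin.snoc (fun _ : Fin N => β') α'
          : Fin (N + 1) → C ⊗[K] L →ₗ[K] C ⊗[K] L) j (z j))
        = Fin.snoc (fun i : Fin N => β' (z i.castSucc)) (α' (z (Fin.last N))) :=
      (snoc_eq_fun_lin z β' α').symm
    calc Fy z = Φ (brT A (fun j => (Fin.snoc (fun _ : Fin N => β') α'
          : Fin (N + 1) → C ⊗[K] L →ₗ[K] C ⊗[K] L) j (z j))) := rfl
      _ = _ := by rw [h5, hΦa]
  have hGya : ∀ (k : Fin (N + 1)) (z : Fin (N + 1) → C ⊗[K] L),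
      Gy k z = brT A (Function.update (fun j => β' (β' (z j))) k
        (brT A (Fin.snoc (fun i : Fin N => β' (x i)) (α' (z k))))) := by
    intro k z
    have h6 := update_eq_fun z (β' ∘ₗ β') (Ψ ∘ₗ α') k
    calc Gy k z = brT A (fun j =>
          (Function.update (fun _ : Fin (N + 1) => β' ∘ₗ β') k (Ψ ∘ₗ α')) j (z j)) := rfl
      _ = brT A (Function.update (fun j => (β' ∘ₗ β') (z j)) k ((Ψ ∘ₗ α') (z k))) := by rw [h6]
      _ = _ := by
          rw [show (Ψ ∘ₗ α') (z k) = Ψ (α' (z k)) from rfl, hΨa]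
          rfl
  have main : Fy y = ∑ k : Fin (N + 1),
      A.ε (∑ i, dx i) (∑ l ∈ Finset.Iio k, dy l) • Gy k y := by
    have hgen : ∀ z : Fin (N + 1) → C ⊗[K] L,
        (∀ j, z j ∈ {t : C ⊗[K] L | ∃ (c : C) (vv : L),
          vv ∈ A.grading (dy j) ∧ t = c ⊗ₜ[K] vv}) →
        Fy z = (∑ k : Fin (N + 1),
          A.ε (∑ i, dx i) (∑ l ∈ Finset.Iio k, dy l) • Gy k) z := by
      intro z hz
      choose b w hw hz' using hz
      have hzz : z = fun j => b j ⊗ₜ[K] w j := funext hz'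
      subst hzz
      rw [MultilinearMap.sum_apply]
      simp only [MultilinearMap.smul_apply]
      rw [hFya]
      have hG : ∀ k : Fin (N + 1), Gy k (fun j => b j ⊗ₜ[K] w j)
          = brT A (Function.update (fun j => β' (β' (b j ⊗ₜ[K] w j))) k
            (brT A (Fin.snoc (fun i : Fin N => β' (x i)) (α' (b k ⊗ₜ[K] w k))))) := by
        intro k
        rw [hGya]
      simp only [hG]
      have hcore := core b w hw
      simpa using hcore
    have h := eq_on_span Fy
      (∑ k : Fin (N + 1), A.ε (∑ i, dx i) (∑ l ∈ Finset.Iio k, dy l) • Gy k)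
      (fun j => {t : C ⊗[K] L | ∃ (c : C) (vv : L), vv ∈ A.grading (dy j) ∧ t = c ⊗ₜ[K] vv})
      hgen y (fun j => by rw [← range_lTensor_eq_span]; exact hy j)
    rw [h, MultilinearMap.sum_apply]
    simp only [MultilinearMap.smul_apply]
  rw [show brT A (Fin.snoc (fun i : Fin N => β' (β' (x i)))
      (brT A (Fin.snoc (fun i : Fin N => β' (y i.castSucc)) (α' (y (Fin.last N))))))
    = Fy y from (hFya y).symm]
  rw [main]
  refine Finset.sum_congr rfl fun k _ => ?_
  rw [hGya]


end Aux3

/-- The tensor product of a commutative associative `K`-algebra `C` with an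
`n`-BiHom-Lie color algebra `L` is an `n`-BiHom-Lie color algebra with
`[a₁⊗x₁,…,aₙ⊗xₙ]' = a₁⋯aₙ ⊗ [x₁,…,xₙ]`, `α'(a⊗x) = a⊗α(x)`, `β'(a⊗x) = a⊗β(x)`,
and grading `(C ⊗ L)_γ = C ⊗ L_γ`. -/
theorem tensor_nBLCA {K : Type*} [Field K] {Γ : Type*} [AddCommGroup Γ] [DecidableEq Γ]
    {N : ℕ} {L : Type*} [AddCommGroup L] [Module K L]
    {C : Type*} [CommRing C] [Algebra K C]
    (A : NBLCA K Γ N L) :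
    ∃ B : NBLCA K Γ N (C ⊗[K] L),
      B.ε = A.ε ∧
      (∀ γ, B.grading γ = LinearMap.range
          (TensorProduct.map (LinearMap.id : C →ₗ[K] C) (A.grading γ).subtype)) ∧
      (∀ (c : C) (x : L), B.α (c ⊗ₜ[K] x) = c ⊗ₜ[K] A.α x) ∧
      (∀ (c : C) (x : L), B.β (c ⊗ₜ[K] x) = c ⊗ₜ[K] A.β x) ∧
      ∀ (c : Fin (N + 1) → C) (x : Fin (N + 1) → L),
        B.bracket (fun i => c i ⊗ₜ[K] x i) = (∏ i, c i) ⊗ₜ[K] A.bracket x := by 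
  classical
  refine ⟨{ grading := fun γ => grT A γ
          , internal := internal_tensor A.grading A.internal
          , ε := A.ε
          , α := LinearMap.lTensor C A.α
          , β := LinearMap.lTensor C A.β
          , bracket := brT A
          , eps_ne := A.eps_ne
          , eps_skew := A.eps_skew
          , eps_add_right := A.eps_add_right
          , eps_add_left := A.eps_add_left
          , α_even := fun γ t ht => lTensor_even A.grading A.α A.α_even γ t ht
          , β_even := fun γ t ht => lTensor_even A.grading A.β A.β_even γ t ht
          , αβ_comm := lTensor_comm A.α A.β A.αβ_comm
          , bracket_grade := fun d x hx => t_bracket_grade A d x hx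
          , skew := fun d x hx k => t_skew A d x hx k
          , jacobi := fun dx x dy y hx hy => t_jacobi A dx x dy y hx hy },
      rfl, fun γ => rfl, fun c x => ?_, fun c x => ?_, fun c x => ?_⟩
  · exact LinearMap.lTensor_tmul C A.α c x
  · exact LinearMap.lTensor_tmul C A.β c x
  · exact brT_tmul A c x
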